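/- The categorical shift map L_b on the simplex is (Δ^{-1/2})-Lipschitz in the shift: for the single-atom coefficients e_m, the map t ↦ L_t e_m (project the Dirac mass at θ_m + t back onto the grid Θ with stride Δ by linear interpolation and edge clipping) satisfies ℓ^Θ_C(L_b e_m, L_{b'} e_m) ≤ Δ^{−1/2}|b − b'| for all b, b' ∈ ℝ. More generally, for all p, q ∈ Δ_d and b, b' ∈ ℝ, ℓ^Θ_C(L_b p, L_{b'} q) ≤ ℓ^Θ_C(p, q) + Δ^{−1/2}|b − b'|. -/

import Mathlib

/-- Cumulative mass `F_u(θ_k) = Σ_{j ≤ k} u_j`. -/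
def cumul {d : ℕ} (u : Fin d → ℝ) (k : ℕ) : ℝ :=
  ∑ j : Fin d, if (j : ℕ) ≤ k then u j else 0

/-- Coordinate Cramér metric on `Δ_d` for a uniform grid with stride `Δ`. -/
noncomputable def ellTheta (Δ : ℝ) {d : ℕ} (u v : Fin d → ℝ) : ℝ :=
  Real.sqrt (Δ * ∑ k ∈ Finset.range (d - 1), (cumul u k - cumul v k) ^ 2)

/-- Hat (linear-interpolation with edge clipping) function of the uniform grid
`θ_k = θ0 + k·Δ`, `k = 0, …, d−1`, evaluated at `x`. -/
noncomputable def hatFn (θ0 Δ : ℝ) (d k : ℕ) (x : ℝ) : ℝ :=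
  if k = 0 then min 1 (max 0 ((θ0 + Δ - x) / Δ))
  else if k = d - 1 then min 1 (max 0 ((x - (θ0 + ((d : ℝ) - 2) * Δ)) / Δ))
  else max 0 (1 - |x - (θ0 + (k : ℝ) * Δ)| / Δ)

/-- The categorical shift map `L_t`: translate the categorical law with
coefficients `p` by `t` and project back onto the grid by linear interpolation
with edge clipping. -/
noncomputable def shiftMap (θ0 Δ : ℝ) (d : ℕ) (t : ℝ) (p : Fin d → ℝ) : Fin d → ℝ :=
  fun k => ∑ m : Fin d, p m * hatFn θ0 Δ d k (θ0 + (m : ℝ) * Δ + t)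

/-- The single-atom coefficient vector `e_m`. -/
def atom {d : ℕ} (m : Fin d) : Fin d → ℝ := fun j => if j = m then 1 else 0

open Finset

noncomputable def clip (a : ℝ) : ℝ := min 1 (max 0 a)

lemma clip_nonneg (a : ℝ) : 0 ≤ clip a := le_min zero_le_one (le_max_left 0 a)
lemma clip_le_one (a : ℝ) : clip a ≤ 1 := min_le_left _ _
lemma clip_mono {a b : ℝ} (h : a ≤ b) : clip a ≤ clip b :=
  min_le_min le_rfl (max_le_max le_rfl h)

lemma clip_succ_sub (a : ℝ) : clip (a + 1) - clip a = max 0 (1 - |a|) := by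
  rcases abs_cases a with ⟨h1, h2⟩ | ⟨h1, h2⟩ <;>
    simp only [clip, min_def, max_def, h1] <;> split_ifs <;> linarith

lemma clip_diff_eq {s s' : ℝ} (h : s ≤ s') (A : ℝ) :
    clip (A - s) - clip (A - s') = max s (min s' A) - max s (min s' (A - 1)) := by
  simp only [clip, min_def, max_def]
  split_ifs <;> linarith

/-- c function: cumulative clip coefficients -/
noncomputable def cfun (s : ℝ) (k m : ℕ) : ℝ := clip ((k : ℝ) + 1 - (m : ℝ) - s)

lemma hat_interior (θ0 Δ : ℝ) (hΔ : 0 < Δ) (d j : ℕ) (hj : j ≠ 0) (hj2 : j ≠ d - 1) (x : ℝ) :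
    hatFn θ0 Δ d j x =
      clip ((θ0 + ((j : ℝ) + 1) * Δ - x) / Δ) - clip ((θ0 + (j : ℝ) * Δ - x) / Δ) := by
  have key := clip_succ_sub ((θ0 + (j : ℝ) * Δ - x) / Δ)
  have harg : (θ0 + (j : ℝ) * Δ - x) / Δ + 1 = (θ0 + ((j : ℝ) + 1) * Δ - x) / Δ := by
    field_simp; ring
  have habs : |x - (θ0 + (j : ℝ) * Δ)| / Δ = |(θ0 + (j : ℝ) * Δ - x) / Δ| := by
    rw [abs_div, abs_of_pos hΔ, abs_sub_comm]
  rw [hatFn, if_neg hj, if_neg hj2, habs, ← key, harg]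

lemma hat_sum (θ0 Δ : ℝ) (hΔ : 0 < Δ) (d : ℕ) (x : ℝ) :
    ∀ k, k < d - 1 →
      ∑ j ∈ range (k + 1), hatFn θ0 Δ d j x = clip ((θ0 + ((k : ℝ) + 1) * Δ - x) / Δ) := by
  intro k
  induction k with
  | zero =>
    intro hk
    simp only [range_one, sum_singleton, hatFn, if_pos rfl, clip, Nat.cast_zero]
    norm_num
  | succ k ih =>
    intro hk
    have hk' : k < d - 1 := Nat.lt_of_succ_lt hk
    rw [sum_range_succ, ih hk', hat_interior θ0 Δ hΔ d (k+1) (Nat.succ_ne_zero k)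
      (by omega) x]
    push_cast
    ring_nf


lemma range_filter_le' (d k : ℕ) (hk : k + 1 ≤ d) :
    (range d).filter (fun j => j ≤ k) = range (k + 1) := by
  ext j; simp only [Finset.mem_filter, Finset.mem_range]; omega

/-- extension of a `Fin d` vector to `ℕ` by zero -/
noncomputable def extz {d : ℕ} (u : Fin d → ℝ) (j : ℕ) : ℝ := if h : j < d then u ⟨j, h⟩ else 0

lemma cumul_eq_range {d : ℕ} (u : Fin d → ℝ) (k : ℕ) (hk : k < d) :
    cumul u k = ∑ j ∈ range (k + 1), extz u j := by
  have h1 : cumul u k = ∑ j ∈ range d, (if j ≤ k then extz u j else 0) := by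
    rw [cumul, ← Fin.sum_univ_eq_sum_range (fun j => if j ≤ k then extz u j else 0) d]
    apply Finset.sum_congr rfl
    intro j _
    simp [extz, j.isLt]
  rw [h1, ← Finset.sum_filter, range_filter_le' d k hk]

lemma cumul_shift (θ0 Δ : ℝ) (hΔ : 0 < Δ) (d : ℕ) (t : ℝ) (p : Fin d → ℝ) (k : ℕ)
    (hk : k < d - 1) :
    cumul (shiftMap θ0 Δ d t p) k = ∑ m : Fin d, p m * cfun (t / Δ) k (m : ℕ) := by
  have h1 : ∀ j : Fin d, (if (j : ℕ) ≤ k then shiftMap θ0 Δ d t p j else 0)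
      = ∑ m : Fin d, p m * (if (j : ℕ) ≤ k then hatFn θ0 Δ d (j : ℕ) (θ0 + (m : ℝ) * Δ + t) else 0) := by
    intro j
    split_ifs with h
    · rfl
    · simp
  rw [cumul]
  simp_rw [h1]
  rw [Finset.sum_comm]
  apply Finset.sum_congr rfl
  intro m _
  rw [← Finset.mul_sum]
  congr 1
  set x := θ0 + (m : ℝ) * Δ + t with hx
  have h2 : ∑ j : Fin d, (if (j : ℕ) ≤ k then hatFn θ0 Δ d (j : ℕ) x else 0)
      = ∑ j ∈ range d, (if j ≤ k then hatFn θ0 Δ d j x else 0) :=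
    Fin.sum_univ_eq_sum_range (fun j => if j ≤ k then hatFn θ0 Δ d j x else 0) d
  rw [h2, ← Finset.sum_filter, range_filter_le' d k (by omega),
    hat_sum θ0 Δ hΔ d x k hk, cfun]
  congr 1
  rw [hx]
  field_simp
  ring


lemma cfun_anti_s {s s' : ℝ} (h : s ≤ s') (k m : ℕ) : cfun s' k m ≤ cfun s k m :=
  clip_mono (by linarith)

lemma cfun_anti_m (s : ℝ) (k m : ℕ) : cfun s k (m + 1) ≤ cfun s k m :=
  clip_mono (by push_cast; linarith)

lemma cfun_l1 {s s' : ℝ} (h : s ≤ s') (m n : ℕ) :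
    ∑ k ∈ range n, (cfun s k m - cfun s' k m) ≤ s' - s := by
  set f : ℕ → ℝ := fun j => max s (min s' ((j : ℝ) - (m : ℝ))) with hf
  have hterm : ∀ k, cfun s k m - cfun s' k m = f (k + 1) - f k := by
    intro k
    simp only [cfun, hf]
    rw [clip_diff_eq h ((k : ℝ) + 1 - (m : ℝ))]
    push_cast
    ring_nf
  simp_rw [hterm]
  rw [Finset.sum_range_sub f n]
  have h1 : f n ≤ s' := max_le h (min_le_left _ _)
  have h2 : s ≤ f 0 := le_max_left _ _
  linarith

lemma cfun_l2_aux {s s' : ℝ} (h : s ≤ s') (m n : ℕ) :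
    ∑ k ∈ range n, (cfun s k m - cfun s' k m) ^ 2 ≤ (s' - s) ^ 2 := by
  have hnn : ∀ k ∈ range n, 0 ≤ cfun s k m - cfun s' k m :=
    fun k _ => sub_nonneg.2 (cfun_anti_s h k m)
  calc ∑ k ∈ range n, (cfun s k m - cfun s' k m) ^ 2
      ≤ (∑ k ∈ range n, (cfun s k m - cfun s' k m)) ^ 2 :=
        Finset.sum_sq_le_sq_sum_of_nonneg hnn
    _ ≤ (s' - s) ^ 2 := by
        apply pow_le_pow_left₀ (Finset.sum_nonneg hnn) (cfun_l1 h m n)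

lemma cfun_l2 (s s' : ℝ) (m n : ℕ) :
    ∑ k ∈ range n, (cfun s k m - cfun s' k m) ^ 2 ≤ (s - s') ^ 2 := by
  rcases le_total s s' with h | h
  · have := cfun_l2_aux h m n
    have e : (s - s') ^ 2 = (s' - s) ^ 2 := by ring
    linarith [this, e.ge]
  · have := cfun_l2_aux h m n
    have e : ∀ k, (cfun s k m - cfun s' k m) ^ 2 = (cfun s' k m - cfun s k m) ^ 2 :=
      fun k => by ring
    simp_rw [e]
    linarith

lemma cfun_col_sum (s : ℝ) (i n : ℕ) :
    ∑ k ∈ range n, (cfun s k i - cfun s k (i + 1)) ≤ 1 := by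
  set f : ℕ → ℝ := fun j => clip ((j : ℝ) - (i : ℝ) - s) with hf
  have hterm : ∀ k, cfun s k i - cfun s k (i + 1) = f (k + 1) - f k := by
    intro k
    simp only [cfun, hf]
    push_cast
    ring_nf
  simp_rw [hterm]
  rw [Finset.sum_range_sub f n]
  have h1 : f n ≤ 1 := clip_le_one _
  have h2 : 0 ≤ f 0 := clip_nonneg _
  linarith

lemma cfun_row_sum (s : ℝ) (k n : ℕ) :
    ∑ i ∈ range n, (cfun s k i - cfun s k (i + 1)) ≤ 1 := by
  rw [Finset.sum_range_sub' (fun i => cfun s k i) n]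
  have h1 : cfun s k 0 ≤ 1 := clip_le_one _
  have h2 : 0 ≤ cfun s k n := clip_nonneg _
  simp only [cfun] at h1 h2 ⊢
  linarith

lemma abel_key (d : ℕ) (r : ℕ → ℝ) (hr : ∑ j ∈ range d, r j = 0) (c : ℕ → ℝ) :
    ∑ m ∈ range d, r m * c m
      = ∑ i ∈ range (d - 1), (∑ j ∈ range (i + 1), r j) * (c i - c (i + 1)) := by
  have h0 : ∑ m ∈ range d, r m * c m = ∑ m ∈ range d, c m • r m := by
    apply Finset.sum_congr rfl; intro m _; simp [mul_comm]
  rw [h0, Finset.sum_range_by_parts c r d, hr, smul_zero, zero_sub]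
  rw [← Finset.sum_neg_distrib]
  apply Finset.sum_congr rfl
  intro i _
  simp only [smul_eq_mul]
  ring


lemma sum_mul_le_sqrt (n : ℕ) (a b : ℕ → ℝ) :
    ∑ k ∈ range n, a k * b k
      ≤ Real.sqrt (∑ k ∈ range n, a k ^ 2) * Real.sqrt (∑ k ∈ range n, b k ^ 2) := by
  have h := Finset.sum_mul_sq_le_sq_mul_sq (range n) a b
  calc ∑ k ∈ range n, a k * b k ≤ |∑ k ∈ range n, a k * b k| := le_abs_self _
    _ = Real.sqrt ((∑ k ∈ range n, a k * b k) ^ 2) := (Real.sqrt_sq_eq_abs _).symm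
    _ ≤ Real.sqrt ((∑ k ∈ range n, a k ^ 2) * ∑ k ∈ range n, b k ^ 2) :=
        Real.sqrt_le_sqrt h
    _ = _ := Real.sqrt_mul (Finset.sum_nonneg fun k _ => sq_nonneg _) _

lemma sqrt_sum_sq_add (n : ℕ) (a b : ℕ → ℝ) :
    Real.sqrt (∑ k ∈ range n, (a k + b k) ^ 2)
      ≤ Real.sqrt (∑ k ∈ range n, a k ^ 2) + Real.sqrt (∑ k ∈ range n, b k ^ 2) := by
  set A := ∑ k ∈ range n, a k ^ 2 with hA
  set B := ∑ k ∈ range n, b k ^ 2 with hB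
  have hAnn : 0 ≤ A := Finset.sum_nonneg fun k _ => sq_nonneg _
  have hBnn : 0 ≤ B := Finset.sum_nonneg fun k _ => sq_nonneg _
  have hab := sum_mul_le_sqrt n a b
  have hexp : ∑ k ∈ range n, (a k + b k) ^ 2
      = A + 2 * (∑ k ∈ range n, a k * b k) + B := by
    rw [hA, hB, Finset.mul_sum, ← Finset.sum_add_distrib, ← Finset.sum_add_distrib]
    apply Finset.sum_congr rfl; intro k _; ring
  have hsq : Real.sqrt A ^ 2 = A := Real.sq_sqrt hAnn
  have hsq' : Real.sqrt B ^ 2 = B := Real.sq_sqrt hBnn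
  have key : ∑ k ∈ range n, (a k + b k) ^ 2 ≤ (Real.sqrt A + Real.sqrt B) ^ 2 := by
    have : (Real.sqrt A + Real.sqrt B) ^ 2
        = Real.sqrt A ^ 2 + 2 * (Real.sqrt A * Real.sqrt B) + Real.sqrt B ^ 2 := by ring
    rw [this, hsq, hsq', hexp]
    linarith
  calc Real.sqrt (∑ k ∈ range n, (a k + b k) ^ 2)
      ≤ Real.sqrt ((Real.sqrt A + Real.sqrt B) ^ 2) := Real.sqrt_le_sqrt key
    _ = Real.sqrt A + Real.sqrt B :=
        Real.sqrt_sq (by positivity)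

lemma sqrt_sum_sq_sum_le {ι : Type*} (S : Finset ι) (v : ι → ℕ → ℝ) (n : ℕ) :
    Real.sqrt (∑ k ∈ range n, (∑ m ∈ S, v m k) ^ 2)
      ≤ ∑ m ∈ S, Real.sqrt (∑ k ∈ range n, v m k ^ 2) := by
  classical
  induction S using Finset.induction with
  | empty => simp
  | @insert a S ha ih =>
    have hins : ∀ k, ∑ m ∈ insert a S, v m k = v a k + ∑ m ∈ S, v m k :=
      fun k => Finset.sum_insert ha
    simp_rw [hins, Finset.sum_insert ha]
    exact le_trans (sqrt_sum_sq_add n (v a) (fun k => ∑ m ∈ S, v m k))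
      (add_le_add le_rfl ih)

lemma schur_step (n : ℕ) (w R : ℕ → ℝ) (hw : ∀ i, 0 ≤ w i)
    (hrow : ∑ i ∈ range n, w i ≤ 1) :
    (∑ i ∈ range n, R i * w i) ^ 2 ≤ ∑ i ∈ range n, w i * R i ^ 2 := by
  have cs := Finset.sum_mul_sq_le_sq_mul_sq (range n) (fun i => Real.sqrt (w i))
      (fun i => Real.sqrt (w i) * R i)
  have e1 : ∀ i, Real.sqrt (w i) * (Real.sqrt (w i) * R i) = R i * w i := fun i => by
    rw [← mul_assoc, Real.mul_self_sqrt (hw i)]; ring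
  have e2 : ∀ i, Real.sqrt (w i) ^ 2 = w i := fun i => Real.sq_sqrt (hw i)
  have e3 : ∀ i, (Real.sqrt (w i) * R i) ^ 2 = w i * R i ^ 2 := fun i => by
    rw [mul_pow, e2]
  simp only [e1, e2, e3] at cs
  have hnn : 0 ≤ ∑ i ∈ range n, w i * R i ^ 2 :=
    Finset.sum_nonneg fun i _ => mul_nonneg (hw i) (sq_nonneg _)
  calc (∑ i ∈ range n, R i * w i) ^ 2
      ≤ (∑ i ∈ range n, w i) * ∑ i ∈ range n, w i * R i ^ 2 := cs
    _ ≤ 1 * ∑ i ∈ range n, w i * R i ^ 2 := by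
        apply mul_le_mul_of_nonneg_right hrow hnn
    _ = _ := one_mul _

lemma Ybound (s : ℝ) (d : ℕ) (r : ℕ → ℝ) (hr : ∑ j ∈ range d, r j = 0) :
    ∑ k ∈ range (d - 1), (∑ m ∈ range d, r m * cfun s k m) ^ 2
      ≤ ∑ i ∈ range (d - 1), (∑ j ∈ range (i + 1), r j) ^ 2 := by
  set R : ℕ → ℝ := fun i => ∑ j ∈ range (i + 1), r j with hR
  have habel : ∀ k, ∑ m ∈ range d, r m * cfun s k m
      = ∑ i ∈ range (d - 1), R i * (cfun s k i - cfun s k (i + 1)) :=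
    fun k => abel_key d r hr (fun m => cfun s k m)
  calc ∑ k ∈ range (d - 1), (∑ m ∈ range d, r m * cfun s k m) ^ 2
      = ∑ k ∈ range (d - 1), (∑ i ∈ range (d - 1), R i * (cfun s k i - cfun s k (i + 1))) ^ 2 := by
        simp_rw [habel]
    _ ≤ ∑ k ∈ range (d - 1), ∑ i ∈ range (d - 1),
          (cfun s k i - cfun s k (i + 1)) * R i ^ 2 := by
        apply Finset.sum_le_sum
        intro k _
        exact schur_step (d - 1) (fun i => cfun s k i - cfun s k (i + 1)) R
          (fun i => sub_nonneg.2 (cfun_anti_m s k i)) (cfun_row_sum s k (d - 1))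
    _ = ∑ i ∈ range (d - 1), (∑ k ∈ range (d - 1), (cfun s k i - cfun s k (i + 1))) * R i ^ 2 := by
        rw [Finset.sum_comm]
        apply Finset.sum_congr rfl
        intro i _
        rw [Finset.sum_mul]
    _ ≤ ∑ i ∈ range (d - 1), 1 * R i ^ 2 := by
        apply Finset.sum_le_sum
        intro i _
        apply mul_le_mul_of_nonneg_right (cfun_col_sum s i (d - 1)) (sq_nonneg _)
    _ = _ := by simp [hR]

/-- the categorical shift map is `Δ^{-1/2}`-Lipschitz in the
shift on single atoms, and more generally
`ℓ^Θ_C(L_b p, L_{b'} q) ≤ ℓ^Θ_C(p, q) + Δ^{−1/2}|b − b'|`. -/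
theorem shiftMap_lipschitz
    (θ0 Δ : ℝ) (hΔ : 0 < Δ) (d : ℕ) (hd : 2 ≤ d) :
    (∀ (m : Fin d) (b b' : ℝ),
      ellTheta Δ (shiftMap θ0 Δ d b (atom m)) (shiftMap θ0 Δ d b' (atom m))
        ≤ Δ ^ (-(1 / 2 : ℝ)) * |b - b'|)
    ∧ (∀ (p q : Fin d → ℝ), p ∈ stdSimplex ℝ (Fin d) → q ∈ stdSimplex ℝ (Fin d) →
        ∀ (b b' : ℝ),
        ellTheta Δ (shiftMap θ0 Δ d b p) (shiftMap θ0 Δ d b' q)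
          ≤ ellTheta Δ p q + Δ ^ (-(1 / 2 : ℝ)) * |b - b'|) := by
  have hsΔ : (0 : ℝ) < Real.sqrt Δ := Real.sqrt_pos.2 hΔ
  have hpow : Δ ^ (-(1 / 2 : ℝ)) = (Real.sqrt Δ)⁻¹ := by
    rw [Real.rpow_neg hΔ.le, Real.sqrt_eq_rpow]
  have main : ∀ (p q : Fin d → ℝ), p ∈ stdSimplex ℝ (Fin d) → q ∈ stdSimplex ℝ (Fin d) →
      ∀ (b b' : ℝ),
      ellTheta Δ (shiftMap θ0 Δ d b p) (shiftMap θ0 Δ d b' q)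
        ≤ ellTheta Δ p q + Δ ^ (-(1 / 2 : ℝ)) * |b - b'| := by
    intro p q hp hq b b'
    set s := b / Δ with hs
    set s' := b' / Δ with hs'
    set X : ℕ → ℝ := fun k => ∑ m : Fin d, p m * (cfun s k (m : ℕ) - cfun s' k (m : ℕ)) with hX
    set r : ℕ → ℝ := fun m => extz p m - extz q m with hr
    set Y : ℕ → ℝ := fun k => ∑ m ∈ range d, r m * cfun s' k m with hY
    have hdecomp : ∀ k ∈ range (d - 1),
        cumul (shiftMap θ0 Δ d b p) k - cumul (shiftMap θ0 Δ d b' q) k = X k + Y k := by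
      intro k hk
      rw [Finset.mem_range] at hk
      rw [cumul_shift θ0 Δ hΔ d b p k hk, cumul_shift θ0 Δ hΔ d b' q k hk]
      have hY' : Y k = ∑ m : Fin d, (p m - q m) * cfun s' k (m : ℕ) := by
        simp only [hY]
        rw [← Fin.sum_univ_eq_sum_range (fun m => r m * cfun s' k m) d]
        apply Finset.sum_congr rfl
        intro m _
        simp [hr, extz, m.isLt]
      rw [hX, hY', ← Finset.sum_add_distrib, ← Finset.sum_sub_distrib]
      apply Finset.sum_congr rfl
      intro m _
      ring
    have hsplit : ellTheta Δ (shiftMap θ0 Δ d b p) (shiftMap θ0 Δ d b' q)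
        = Real.sqrt Δ * Real.sqrt (∑ k ∈ range (d - 1), (X k + Y k) ^ 2) := by
      rw [ellTheta, Finset.sum_congr rfl (fun k hk => by rw [hdecomp k hk]),
        Real.sqrt_mul hΔ.le]
    have hXbound : Real.sqrt (∑ k ∈ range (d - 1), X k ^ 2) ≤ |b - b'| / Δ := by
      have h1 := sqrt_sum_sq_sum_le (Finset.univ : Finset (Fin d))
        (fun m k => p m * (cfun s k (m : ℕ) - cfun s' k (m : ℕ))) (d - 1)
      refine le_trans h1 ?_
      have hterm : ∀ m : Fin d,
          Real.sqrt (∑ k ∈ range (d - 1),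
            (p m * (cfun s k (m : ℕ) - cfun s' k (m : ℕ))) ^ 2) ≤ p m * |s - s'| := by
        intro m
        have e : ∀ k, (p m * (cfun s k (m : ℕ) - cfun s' k (m : ℕ))) ^ 2
            = p m ^ 2 * (cfun s k (m : ℕ) - cfun s' k (m : ℕ)) ^ 2 := fun k => by ring
        simp_rw [e]
        rw [← Finset.mul_sum, Real.sqrt_mul (sq_nonneg _), Real.sqrt_sq (hp.1 m)]
        apply mul_le_mul_of_nonneg_left ?_ (hp.1 m)
        calc Real.sqrt (∑ k ∈ range (d - 1), (cfun s k (m : ℕ) - cfun s' k (m : ℕ)) ^ 2)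
            ≤ Real.sqrt ((s - s') ^ 2) := Real.sqrt_le_sqrt (cfun_l2 s s' (m : ℕ) (d - 1))
          _ = |s - s'| := Real.sqrt_sq_eq_abs _
      calc ∑ m : Fin d, Real.sqrt (∑ k ∈ range (d - 1),
              (p m * (cfun s k (m : ℕ) - cfun s' k (m : ℕ))) ^ 2)
          ≤ ∑ m : Fin d, p m * |s - s'| := Finset.sum_le_sum (fun m _ => hterm m)
        _ = |s - s'| := by rw [← Finset.sum_mul, hp.2, one_mul]
        _ = |b - b'| / Δ := by
            rw [hs, hs', div_sub_div_same, abs_div, abs_of_pos hΔ]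
    have hr0 : ∑ j ∈ range d, r j = 0 := by
      have hp1 : ∑ j ∈ range d, extz p j = 1 := by
        rw [← Fin.sum_univ_eq_sum_range (extz p) d]
        have e : ∀ i : Fin d, extz p (i : ℕ) = p i := fun i => by simp [extz, i.isLt]
        rw [Finset.sum_congr rfl (fun i _ => e i)]
        exact hp.2
      have hq1 : ∑ j ∈ range d, extz q j = 1 := by
        rw [← Fin.sum_univ_eq_sum_range (extz q) d]
        have e : ∀ i : Fin d, extz q (i : ℕ) = q i := fun i => by simp [extz, i.isLt]
        rw [Finset.sum_congr rfl (fun i _ => e i)]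
        exact hq.2
      simp [hr, Finset.sum_sub_distrib, hp1, hq1]
    have hYbound : Real.sqrt (∑ k ∈ range (d - 1), Y k ^ 2)
        ≤ Real.sqrt (∑ k ∈ range (d - 1), (cumul p k - cumul q k) ^ 2) := by
      apply Real.sqrt_le_sqrt
      refine le_trans (Ybound s' d r hr0) (le_of_eq ?_)
      apply Finset.sum_congr rfl
      intro i hi
      rw [Finset.mem_range] at hi
      have : ∑ j ∈ range (i + 1), r j = cumul p i - cumul q i := by
        rw [cumul_eq_range p i (by omega), cumul_eq_range q i (by omega),
          ← Finset.sum_sub_distrib]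
      rw [this]
    have hell : ellTheta Δ p q
        = Real.sqrt Δ * Real.sqrt (∑ k ∈ range (d - 1), (cumul p k - cumul q k) ^ 2) := by
      rw [ellTheta, Real.sqrt_mul hΔ.le]
    have h2 : Real.sqrt Δ * (|b - b'| / Δ) = (Real.sqrt Δ)⁻¹ * |b - b'| := by
      have hΔsq : Real.sqrt Δ * Real.sqrt Δ = Δ := Real.mul_self_sqrt hΔ.le
      field_simp
      nlinarith [abs_nonneg (b - b')]
    rw [hsplit, hell, hpow]
    calc Real.sqrt Δ * Real.sqrt (∑ k ∈ range (d - 1), (X k + Y k) ^ 2)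
        ≤ Real.sqrt Δ * (Real.sqrt (∑ k ∈ range (d - 1), X k ^ 2)
            + Real.sqrt (∑ k ∈ range (d - 1), Y k ^ 2)) :=
          mul_le_mul_of_nonneg_left (sqrt_sum_sq_add (d - 1) X Y) hsΔ.le
      _ ≤ Real.sqrt Δ * ((|b - b'| / Δ)
            + Real.sqrt (∑ k ∈ range (d - 1), (cumul p k - cumul q k) ^ 2)) := by
          apply mul_le_mul_of_nonneg_left (add_le_add hXbound hYbound) hsΔ.le
      _ = Real.sqrt Δ * Real.sqrt (∑ k ∈ range (d - 1), (cumul p k - cumul q k) ^ 2)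
            + Real.sqrt Δ * (|b - b'| / Δ) := by ring
      _ = Real.sqrt Δ * Real.sqrt (∑ k ∈ range (d - 1), (cumul p k - cumul q k) ^ 2)
            + (Real.sqrt Δ)⁻¹ * |b - b'| := by rw [h2]
  constructor
  · intro m b b'
    have hmem : atom m ∈ stdSimplex ℝ (Fin d) := by
      constructor
      · intro j
        simp only [atom]
        split <;> norm_num
      · simp [atom]
    have h0 : ellTheta Δ (atom m) (atom m) = 0 := by
      simp [ellTheta, sub_self]
    have := main (atom m) (atom m) hmem hmem b b'
    rwa [h0, zero_add] at this
  · exact main
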